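/- Let gamma: ℝ^n → (0,∞) be a probability density, define gamma⁻(r) = inf_{|s|<=r} gamma(s) and gamma⁺(r) = sup_{|s|<=r} gamma(s), and let Q(x,A) = ∫_A gamma(x' - f(x)) dx' (Lebesgue measure), with f, h, C(y,Delta), D(y,y') as in (E1). Then for all y, y' ∈ ℝ^p, all x ∈ C(y,Delta), and all measurable A: eps⁻(y,y') * Leb(A ∩ C(y',Delta)) <= Q(x, A ∩ C(y',Delta)) <= eps⁺(y,y') * Leb(A ∩ C(y',Delta)), where eps⁻(y,y') = gamma⁻((a+1)b_0 + (a+1)bDelta + D(y,y')) and eps⁺(y,y') = gamma⁺((a+1)b_0 + (a+1)bDelta + D(y,y')). In particular y ↦ C(y,Delta) is a Local Doeblin set function. -/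

import Mathlib

open MeasureTheory
open scoped ENNReal

/-- Inequality (35): for the kernel `Q(x, A) = ∫_A γ(x' - f x) dx'` with
positive (continuous) state-noise density `γ`, `f` `a`-Lipschitz, `h`
surjective with `‖x₁-x₂‖ ≤ b₀ + b ‖h x₁ - h x₂‖`,
`C(y,Δ) = {x : ‖h x - y‖ ≤ Δ}` and
`D(y,y') = sup {‖f z - z'‖ : h z = y, h z' = y'}` (assumed finite), one has
for all `x ∈ C(y,Δ)` and measurable `A`:
`γ⁻(R) Leb(A ∩ C(y',Δ)) ≤ Q(x, A ∩ C(y',Δ)) ≤ γ⁺(R) Leb(A ∩ C(y',Δ))`,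
where `R = (a+1)b₀ + (a+1)bΔ + D(y,y')`,
`γ⁻(r) = inf_{‖s‖ ≤ r} γ(s)` and `γ⁺(r) = sup_{‖s‖ ≤ r} γ(s)`.
In particular `y ↦ C(y,Δ)` is a Local Doeblin set function. -/
theorem stmt13 {dn dp : ℕ}
    (γ : EuclideanSpace ℝ (Fin dn) → ℝ)
    (hγpos : ∀ s, 0 < γ s) (hγc : Continuous γ)
    (hγint : ∫ s, γ s = 1)
    (f : EuclideanSpace ℝ (Fin dn) → EuclideanSpace ℝ (Fin dn))
    (h : EuclideanSpace ℝ (Fin dn) → EuclideanSpace ℝ (Fin dp))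
    (a b0 b Δ : ℝ) (ha : 0 ≤ a) (hb0 : 0 ≤ b0) (hb : 0 ≤ b) (hΔ : 0 < Δ)
    (hf : ∀ x1 x2, ‖f x1 - f x2‖ ≤ a * ‖x1 - x2‖)
    (hsurj : Function.Surjective h)
    (hinv : ∀ x1 x2, ‖x1 - x2‖ ≤ b0 + b * ‖h x1 - h x2‖)
    (y y' : EuclideanSpace ℝ (Fin dp))
    (hbdd : BddAbove {r : ℝ | ∃ z z', h z = y ∧ h z' = y' ∧ r = ‖f z - z'‖})
    (x : EuclideanSpace ℝ (Fin dn)) (hx : ‖h x - y‖ ≤ Δ)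
    (A : Set (EuclideanSpace ℝ (Fin dn))) (hA : MeasurableSet A) :
    ENNReal.ofReal
        (sInf {r : ℝ | ∃ s, ‖s‖ ≤ (a + 1) * b0 + (a + 1) * b * Δ +
            sSup {r' : ℝ | ∃ z z', h z = y ∧ h z' = y' ∧ r' = ‖f z - z'‖} ∧
          r = γ s}) *
        volume (A ∩ {x' | ‖h x' - y'‖ ≤ Δ}) ≤
      (∫⁻ x' in A ∩ {x' | ‖h x' - y'‖ ≤ Δ}, ENNReal.ofReal (γ (x' - f x))) ∧
    (∫⁻ x' in A ∩ {x' | ‖h x' - y'‖ ≤ Δ}, ENNReal.ofReal (γ (x' - f x))) ≤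
      ENNReal.ofReal
        (sSup {r : ℝ | ∃ s, ‖s‖ ≤ (a + 1) * b0 + (a + 1) * b * Δ +
            sSup {r' : ℝ | ∃ z z', h z = y ∧ h z' = y' ∧ r' = ‖f z - z'‖} ∧
          r = γ s}) *
        volume (A ∩ {x' | ‖h x' - y'‖ ≤ Δ}) := by
  obtain ⟨z, hz⟩ := hsurj y
  obtain ⟨z', hz'⟩ := hsurj y'
  set T := {r' : ℝ | ∃ z z', h z = y ∧ h z' = y' ∧ r' = ‖f z - z'‖} with hT
  have hmemT : ‖f z - z'‖ ∈ T := ⟨z, z', hz, hz', rfl⟩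
  have hD0 : 0 ≤ sSup T := le_trans (norm_nonneg _) (le_csSup hbdd hmemT)
  set R := (a + 1) * b0 + (a + 1) * b * Δ + sSup T with hRdef
  have hR0 : 0 ≤ R := by
    have h1 : 0 ≤ (a + 1) * b0 := by positivity
    have h2 : 0 ≤ (a + 1) * b * Δ := by positivity
    linarith
  set S := A ∩ {x' | ‖h x' - y'‖ ≤ Δ} with hSdef
  have key : ∀ x' ∈ S, ‖x' - f x‖ ≤ R := by
    rintro x' ⟨-, hx'⟩
    have h1 : ‖x' - z'‖ ≤ b0 + b * Δ := by
      calc ‖x' - z'‖ ≤ b0 + b * ‖h x' - h z'‖ := hinv x' z'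
        _ ≤ b0 + b * Δ := by
            rw [hz']; exact add_le_add_right (mul_le_mul_of_nonneg_left hx' hb) _
    have h2 : ‖f z - z'‖ ≤ sSup T := le_csSup hbdd hmemT
    have h3 : ‖f x - f z‖ ≤ a * (b0 + b * Δ) := by
      calc ‖f x - f z‖ ≤ a * ‖x - z‖ := hf x z
        _ ≤ a * (b0 + b * Δ) := by
            apply mul_le_mul_of_nonneg_left _ ha
            calc ‖x - z‖ ≤ b0 + b * ‖h x - h z‖ := hinv x z
              _ ≤ b0 + b * Δ := by
                  rw [hz]; exact add_le_add_right (mul_le_mul_of_nonneg_left hx hb) _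
    have heq : x' - f x = (x' - z') + (z' - f z) + (f z - f x) := by abel
    have h4 : ‖x' - f x‖ ≤ ‖x' - z'‖ + ‖z' - f z‖ + ‖f z - f x‖ := by
      rw [heq]; exact norm_add₃_le
    rw [norm_sub_rev z' (f z)] at h4
    rw [norm_sub_rev (f z) (f x)] at h4
    nlinarith
  set K := {r : ℝ | ∃ s, ‖s‖ ≤ R ∧ r = γ s} with hKdef
  have hKeq : K = γ '' Metric.closedBall 0 R := by
    ext r
    simp only [hKdef, Set.mem_setOf_eq, Set.mem_image, Metric.mem_closedBall,
      dist_zero_right]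
    constructor
    · rintro ⟨s, hs, rfl⟩; exact ⟨s, hs, rfl⟩
    · rintro ⟨s, hs, rfl⟩; exact ⟨s, hs, rfl⟩
  have hKcompact : IsCompact (γ '' Metric.closedBall 0 R) :=
    (isCompact_closedBall 0 R).image hγc
  have hKbddAbove : BddAbove K := by rw [hKeq]; exact hKcompact.bddAbove
  have hKbddBelow : BddBelow K := by
    refine ⟨0, ?_⟩
    rintro r ⟨s, -, rfl⟩
    exact (hγpos s).le
  have hmemK : ∀ x' ∈ S, γ (x' - f x) ∈ K := fun x' hx' => ⟨x' - f x, key x' hx', rfl⟩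
  have hmg : Measurable (fun x' : EuclideanSpace ℝ (Fin dn) =>
      ENNReal.ofReal (γ (x' - f x))) :=
    (ENNReal.continuous_ofReal.comp (hγc.comp (continuous_id.sub continuous_const))).measurable
  constructor
  · calc ENNReal.ofReal (sInf K) * volume S
        = ∫⁻ _ in S, ENNReal.ofReal (sInf K) := (setLIntegral_const _ _).symm
      _ ≤ ∫⁻ x' in S, ENNReal.ofReal (γ (x' - f x)) :=
          setLIntegral_mono hmg (fun x' hx' =>
            ENNReal.ofReal_le_ofReal (csInf_le hKbddBelow (hmemK x' hx')))
  · calc (∫⁻ x' in S, ENNReal.ofReal (γ (x' - f x)))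
        ≤ ∫⁻ _ in S, ENNReal.ofReal (sSup K) :=
          setLIntegral_mono measurable_const (fun x' hx' =>
            ENNReal.ofReal_le_ofReal (le_csSup hKbddAbove (hmemK x' hx')))
      _ = ENNReal.ofReal (sSup K) * volume S := setLIntegral_const _ _
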